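/- For m = 2 and the Fréchet bounds on the moment matrix, the induced bounds on the correlation coefficient are: max(−(ψ_1ψ_2)^{-1}, −ψ_1ψ_2) ≤ ρ_{12} ≤ min(ψ_1/ψ_2, ψ_2/ψ_1), where ψ_j = sqrt(μ_j/(1−μ_j)). Precisely: given ν > 0, μ_1, μ_2 ∈ (0,1), and ρ_{12} ∈ (−1,1), set α_j = νμ_j, σ_j² = μ_j(1−μ_j)/(ν+1), σ_{12} = ρ_{12}σ_1σ_2, and α_{12} = ν((ν+1)σ_{12} + μ_1μ_2). Then the inequalities max(0, α_1 + α_2 − ν) ≤ α_{12} ≤ min(α_1, α_2) hold if and only if max(−(ψ_1ψ_2)^{-1}, −ψ_1ψ_2) ≤ ρ_{12} ≤ min(ψ_1/ψ_2, ψ_2/ψ_1). -/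

import Mathlib

/-- for `m = 2`, the Fréchet bounds on the moment matrix translate into
the correlation bounds `max(−(ψ₁ψ₂)⁻¹, −ψ₁ψ₂) ≤ ρ₁₂ ≤ min(ψ₁/ψ₂, ψ₂/ψ₁)` with
`ψⱼ = √(μⱼ/(1−μⱼ))`. -/
private lemma aux1 (ρ a b c d : ℝ) (ha : 0 < a) (hb : 0 < b) (hc : 0 < c) (hd : 0 < d) :
    0 ≤ ρ * (a * b * c * d) + a ^ 2 * c ^ 2 ↔ -(a * c) ≤ ρ * (b * d) := by
  constructor
  · intro h; nlinarith [mul_pos ha hc]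
  · intro h; nlinarith [mul_pos ha hc]

private lemma aux2 (ρ a b c d : ℝ) (ha : 0 < a) (hb : 0 < b) (hc : 0 < c) (hd : 0 < d)
    (hb2 : b ^ 2 = 1 - a ^ 2) (hd2 : d ^ 2 = 1 - c ^ 2) :
    a ^ 2 + c ^ 2 - 1 ≤ ρ * (a * b * c * d) + a ^ 2 * c ^ 2 ↔ -(b * d) ≤ ρ * (a * c) := by
  constructor
  · intro h; nlinarith [mul_pos hb hd]
  · intro h; nlinarith [mul_pos hb hd]

private lemma aux3 (ρ a b c d : ℝ) (ha : 0 < a) (hb : 0 < b) (hc : 0 < c) (hd : 0 < d)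
    (hd2 : d ^ 2 = 1 - c ^ 2) :
    ρ * (a * b * c * d) + a ^ 2 * c ^ 2 ≤ a ^ 2 ↔ ρ * (b * c) ≤ a * d := by
  constructor
  · intro h; nlinarith [mul_pos ha hd]
  · intro h; nlinarith [mul_pos ha hd]

theorem frechet_correlation_bounds (ν μ₁ μ₂ ρ : ℝ)
    (hν : 0 < ν) (hμ₁ : μ₁ ∈ Set.Ioo (0 : ℝ) 1) (hμ₂ : μ₂ ∈ Set.Ioo (0 : ℝ) 1)
    (hρ : ρ ∈ Set.Ioo (-1 : ℝ) 1)
    (α₁ α₂ σ₁ σ₂ σ₁₂ α₁₂ ψ₁ ψ₂ : ℝ)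
    (hα₁ : α₁ = ν * μ₁) (hα₂ : α₂ = ν * μ₂)
    (hσ₁ : σ₁ = Real.sqrt (μ₁ * (1 - μ₁) / (ν + 1)))
    (hσ₂ : σ₂ = Real.sqrt (μ₂ * (1 - μ₂) / (ν + 1)))
    (hσ₁₂ : σ₁₂ = ρ * σ₁ * σ₂)
    (hα₁₂ : α₁₂ = ν * ((ν + 1) * σ₁₂ + μ₁ * μ₂))
    (hψ₁ : ψ₁ = Real.sqrt (μ₁ / (1 - μ₁)))
    (hψ₂ : ψ₂ = Real.sqrt (μ₂ / (1 - μ₂))) :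
    (max 0 (α₁ + α₂ - ν) ≤ α₁₂ ∧ α₁₂ ≤ min α₁ α₂)
      ↔ (max (-(ψ₁ * ψ₂)⁻¹) (-(ψ₁ * ψ₂)) ≤ ρ ∧ ρ ≤ min (ψ₁ / ψ₂) (ψ₂ / ψ₁)) := by
  obtain ⟨hμ₁0, hμ₁1⟩ := hμ₁
  obtain ⟨hμ₂0, hμ₂1⟩ := hμ₂
  set a := Real.sqrt μ₁ with ha
  set b := Real.sqrt (1 - μ₁) with hb
  set c := Real.sqrt μ₂ with hc
  set d := Real.sqrt (1 - μ₂) with hd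
  have ha0 : 0 < a := Real.sqrt_pos.2 hμ₁0
  have hb0 : 0 < b := Real.sqrt_pos.2 (by linarith)
  have hc0 : 0 < c := Real.sqrt_pos.2 hμ₂0
  have hd0 : 0 < d := Real.sqrt_pos.2 (by linarith)
  have ha2 : a ^ 2 = μ₁ := Real.sq_sqrt hμ₁0.le
  have hb2 : b ^ 2 = 1 - μ₁ := Real.sq_sqrt (by linarith)
  have hc2 : c ^ 2 = μ₂ := Real.sq_sqrt (by linarith)
  have hd2 : d ^ 2 = 1 - μ₂ := Real.sq_sqrt (by linarith)
  have hψ₁' : ψ₁ = a / b := by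
    rw [hψ₁, Real.sqrt_div hμ₁0.le]
  have hψ₂' : ψ₂ = c / d := by
    rw [hψ₂, Real.sqrt_div hμ₂0.le]
  have hν1 : (0:ℝ) < ν + 1 := by linarith
  have hσ₁' : σ₁ = a * b / Real.sqrt (ν + 1) := by
    rw [hσ₁, Real.sqrt_div (mul_nonneg hμ₁0.le (by linarith)), Real.sqrt_mul hμ₁0.le]
  have hσ₂' : σ₂ = c * d / Real.sqrt (ν + 1) := by
    rw [hσ₂, Real.sqrt_div (mul_nonneg hμ₂0.le (by linarith)), Real.sqrt_mul hμ₂0.le]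
  have he2 : Real.sqrt (ν + 1) ^ 2 = ν + 1 := Real.sq_sqrt hν1.le
  have he0 : 0 < Real.sqrt (ν + 1) := Real.sqrt_pos.2 hν1
  have hkey : (ν + 1) * (ρ * (a * b / Real.sqrt (ν + 1)) * (c * d / Real.sqrt (ν + 1)))
      = ρ * (a * b * c * d) := by
    rw [show (ν + 1) * (ρ * (a * b / Real.sqrt (ν + 1)) * (c * d / Real.sqrt (ν + 1))) = ρ * (a * b * c * d) * ((ν + 1) / Real.sqrt (ν + 1) ^ 2) by ring, he2, div_self hν1.ne', mul_one]
  have hA : α₁₂ = ν * (ρ * (a * b * c * d) + a ^ 2 * c ^ 2) := by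
    rw [hα₁₂, hσ₁₂, hσ₁', hσ₂', hkey, ha2, hc2]
  have hac : a ^ 2 * c ^ 2 = μ₁ * μ₂ := by rw [ha2, hc2]
  have hbd : b ^ 2 * d ^ 2 = (1 - μ₁) * (1 - μ₂) := by rw [hb2, hd2]
  have had : a ^ 2 * d ^ 2 = μ₁ * (1 - μ₂) := by rw [ha2, hd2]
  have hcb : c ^ 2 * b ^ 2 = μ₂ * (1 - μ₁) := by rw [hc2, hb2]
  have i1 : 0 ≤ α₁₂ ↔ -(ψ₁ * ψ₂) ≤ ρ := by
    have h12 : ψ₁ * ψ₂ = a * c / (b * d) := by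
      rw [hψ₁', hψ₂']; field_simp
    rw [hA, h12, ← neg_div, div_le_iff₀ (by positivity),
      mul_nonneg_iff_of_pos_left hν]
    exact aux1 ρ a b c d ha0 hb0 hc0 hd0
  have i2 : α₁ + α₂ - ν ≤ α₁₂ ↔ -(ψ₁ * ψ₂)⁻¹ ≤ ρ := by
    have h12 : (ψ₁ * ψ₂)⁻¹ = b * d / (a * c) := by
      rw [hψ₁', hψ₂']; field_simp
    have hsum : α₁ + α₂ - ν = ν * (μ₁ + μ₂ - 1) := by rw [hα₁, hα₂]; ring
    rw [hA, hsum, h12, ← neg_div, div_le_iff₀ (by positivity),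
      mul_le_mul_iff_of_pos_left hν, ← ha2, ← hc2]
    exact aux2 ρ a b c d ha0 hb0 hc0 hd0 (by rw [hb2, ha2]) (by rw [hd2, hc2])
  have i3 : α₁₂ ≤ α₁ ↔ ρ ≤ ψ₁ / ψ₂ := by
    have h12 : ψ₁ / ψ₂ = a * d / (b * c) := by
      rw [hψ₁', hψ₂']; field_simp
    rw [hA, hα₁, h12, le_div_iff₀ (by positivity), mul_le_mul_iff_of_pos_left hν, ← ha2]
    exact aux3 ρ a b c d ha0 hb0 hc0 hd0 (by rw [hd2, hc2])
  have i4 : α₁₂ ≤ α₂ ↔ ρ ≤ ψ₂ / ψ₁ := by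
    have h12 : ψ₂ / ψ₁ = c * b / (d * a) := by
      rw [hψ₁', hψ₂']; field_simp
    have hcomm : ρ * (a * b * c * d) = ρ * (c * d * a * b) := by ring
    rw [hA, hα₂, h12, le_div_iff₀ (by positivity), mul_le_mul_iff_of_pos_left hν, ← hc2,
      hcomm, mul_comm (a ^ 2) (c ^ 2)]
    exact aux3 ρ c d a b hc0 hd0 ha0 hb0 (by rw [hb2, ha2])
  rw [max_le_iff, le_min_iff, max_le_iff, le_min_iff]
  tauto
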